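/- The double integral over [0,1]² of the function V(a,f) = (128/45)π² · (af)^{3/2}(5(1−a)(1−f) − af) for a+f < 1 and (128/45)π² · ((1−a)(1−f))^{3/2}(5af − (1−a)(1−f)) for a+f ≥ 1, equals 4π³/105. -/

import Mathlib

open MeasureTheory Real

/-- The fibre-volume function of real qubit channels over classical channels. -/
noncomputable def Vaf (a f : ℝ) : ℝ :=
  if a + f < 1 then
    128 / 45 * π ^ 2 * (a * f) ^ ((3 : ℝ) / 2) * (5 * (1 - a) * (1 - f) - a * f)
  else
    128 / 45 * π ^ 2 * ((1 - a) * (1 - f)) ^ ((3 : ℝ) / 2) * (5 * a * f - (1 - a) * (1 - f))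

section helpers

lemma rpow_succ' {x : ℝ} (hx : 0 ≤ x) {p : ℝ} (hp : p ≠ 0) (hp1 : p + 1 ≠ 0) :
    x ^ (p + 1) = x ^ p * x := by
  rcases hx.eq_or_lt with h | h
  · rw [← h, Real.zero_rpow hp1, Real.zero_rpow hp]; ring
  · rw [Real.rpow_add h, Real.rpow_one]

lemma cont_rpow' (p : ℝ) (hp : 0 ≤ p) : Continuous fun x : ℝ => x ^ p := by
  simpa using continuous_id.rpow_const fun x => Or.inr hp

lemma contF' (p q : ℝ) (hp : 0 ≤ p) (hq : 0 ≤ q) :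
    Continuous fun a : ℝ => a ^ p * (1-a) ^ q := by
  apply (cont_rpow' p hp).mul
  simpa using (continuous_const.sub continuous_id).rpow_const fun x : ℝ => Or.inr hq

lemma key_int' (c : ℝ) (hc : 0 ≤ c) (A B : ℝ) :
    ∫ f in (0:ℝ)..c, (A + B * f) * f ^ ((3:ℝ)/2)
      = A * c ^ ((5:ℝ)/2) * (2/5) + B * c ^ ((7:ℝ)/2) * (2/7) := by
  have h1 : ∫ f in (0:ℝ)..c, (A + B * f) * f ^ ((3:ℝ)/2)
      = ∫ f in (0:ℝ)..c, (A * f ^ ((3:ℝ)/2) + B * f ^ ((5:ℝ)/2)) := by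
    refine intervalIntegral.integral_congr fun f hf => ?_
    rw [Set.uIcc_of_le hc] at hf
    have h52 : f ^ ((5:ℝ)/2) = f ^ ((3:ℝ)/2) * f := by
      rw [show (5:ℝ)/2 = 3/2 + 1 by norm_num, rpow_succ' hf.1 (by norm_num) (by norm_num)]
    rw [h52]; ring
  rw [h1, intervalIntegral.integral_add (f := fun x => A * x ^ ((3:ℝ)/2)) (g := fun x => B * x ^ ((5:ℝ)/2))
      ((continuous_const.mul (cont_rpow' (3/2) (by norm_num))).intervalIntegrable _ _)
      ((continuous_const.mul (cont_rpow' (5/2) (by norm_num))).intervalIntegrable _ _),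
    intervalIntegral.integral_const_mul, intervalIntegral.integral_const_mul,
    integral_rpow (Or.inl (by norm_num)),
    integral_rpow (Or.inl (by norm_num))]
  rw [show (3:ℝ)/2 + 1 = 5/2 by norm_num, show (5:ℝ)/2 + 1 = 7/2 by norm_num]
  rw [Real.zero_rpow (by norm_num), Real.zero_rpow (by norm_num)]
  ring

lemma inner_eq' {a : ℝ} (ha0 : 0 ≤ a) (ha1 : a ≤ 1) :
    ∫ f in (0:ℝ)..1, Vaf a f
      = 128/45*π^2/7 * (a ^ ((3:ℝ)/2) * (1-a) ^ ((7:ℝ)/2) * (4+8*a)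
        + a ^ ((7:ℝ)/2) * (1-a) ^ ((3:ℝ)/2) * (12-8*a)) := by
  have hc0 : (0:ℝ) ≤ 1 - a := by linarith
  set e1 : ℝ → ℝ := fun f =>
    128/45*π^2 * (a*f) ^ ((3:ℝ)/2) * (5*(1-a)*(1-f) - a*f) with he1
  set e2 : ℝ → ℝ := fun f =>
    128/45*π^2 * ((1-a)*(1-f)) ^ ((3:ℝ)/2) * (5*a*f - (1-a)*(1-f)) with he2
  have h1 : Set.EqOn (Vaf a) e1 (Set.uIcc 0 (1-a)) := by
    intro f hf
    rw [Set.uIcc_of_le hc0] at hf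
    unfold Vaf
    split_ifs with h
    · rfl
    · have hfa : 1 - a = f := by
        have := hf.2; have := not_lt.mp h; linarith
      have hfb : 1 - f = a := by linarith
      simp only [he1, hfa, hfb]
      rw [mul_comm f a]
      ring
  have h2 : Set.EqOn (Vaf a) e2 (Set.uIcc (1-a) 1) := by
    intro f hf
    rw [Set.uIcc_of_le (by linarith)] at hf
    unfold Vaf
    rw [if_neg (by push_neg; linarith [hf.1])]
  have hce1 : Continuous e1 := by
    refine Continuous.mul (Continuous.mul continuous_const ?_) (by fun_prop)
    exact (continuous_const.mul continuous_id).rpow_const fun x => Or.inr (by norm_num)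
  have hce2 : Continuous e2 := by
    refine Continuous.mul (Continuous.mul continuous_const ?_) (by fun_prop)
    exact (by fun_prop : Continuous fun f : ℝ => (1-a)*(1-f)).rpow_const
      fun x => Or.inr (by norm_num)
  have int1 : IntervalIntegrable (Vaf a) volume 0 (1-a) :=
    (ContinuousOn.congr hce1.continuousOn h1).intervalIntegrable
  have int2 : IntervalIntegrable (Vaf a) volume (1-a) 1 :=
    (ContinuousOn.congr hce2.continuousOn h2).intervalIntegrable
  rw [← intervalIntegral.integral_add_adjacent_intervals int1 int2,
    intervalIntegral.integral_congr h1, intervalIntegral.integral_congr h2]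
  have p1 : ∫ f in (0:ℝ)..(1-a), e1 f
      = ∫ f in (0:ℝ)..(1-a), ((128/45*π^2 * a ^ ((3:ℝ)/2) * (5*(1-a)))
          + (-(128/45*π^2 * a ^ ((3:ℝ)/2) * (5-4*a))) * f) * f ^ ((3:ℝ)/2) := by
    refine intervalIntegral.integral_congr fun f hf => ?_
    rw [Set.uIcc_of_le hc0] at hf
    simp only [he1]
    rw [Real.mul_rpow ha0 hf.1]
    ring
  have p2 : ∫ f in (1-a:ℝ)..1, e2 f
      = ∫ u in (0:ℝ)..a, ((128/45*π^2 * (1-a) ^ ((3:ℝ)/2) * (5*a))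
          + (-(128/45*π^2 * (1-a) ^ ((3:ℝ)/2) * (4*a+1))) * u) * u ^ ((3:ℝ)/2) := by
    have step1 : ∫ f in (1-a:ℝ)..1, e2 f
        = ∫ f in (1-a:ℝ)..1,
            (fun u => 128/45*π^2 * ((1-a)*u) ^ ((3:ℝ)/2) * (5*a*(1-u) - (1-a)*u)) (1 - f) := by
      refine intervalIntegral.integral_congr fun f _ => ?_
      simp only [he2, sub_sub_cancel]
    rw [step1]
    rw [intervalIntegral.integral_comp_sub_left
      (fun u => 128/45*π^2 * ((1-a)*u) ^ ((3:ℝ)/2) * (5*a*(1-u) - (1-a)*u)) 1]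
    rw [show (1:ℝ) - 1 = 0 by ring, show 1 - (1-a) = a by ring]
    refine intervalIntegral.integral_congr fun u hu => ?_
    rw [Set.uIcc_of_le ha0] at hu
    rw [Real.mul_rpow hc0 hu.1]
    ring
  rw [p1, p2, key_int' _ hc0, key_int' _ ha0]
  have hA5 : a ^ ((5:ℝ)/2) = a ^ ((3:ℝ)/2) * a := by
    rw [show (5:ℝ)/2 = 3/2 + 1 by norm_num, rpow_succ' ha0 (by norm_num) (by norm_num)]
  have hA7 : a ^ ((7:ℝ)/2) = a ^ ((5:ℝ)/2) * a := by
    rw [show (7:ℝ)/2 = 5/2 + 1 by norm_num, rpow_succ' ha0 (by norm_num) (by norm_num)]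
  have hC5 : (1-a) ^ ((5:ℝ)/2) = (1-a) ^ ((3:ℝ)/2) * (1-a) := by
    rw [show (5:ℝ)/2 = 3/2 + 1 by norm_num, rpow_succ' hc0 (by norm_num) (by norm_num)]
  have hC7 : (1-a) ^ ((7:ℝ)/2) = (1-a) ^ ((5:ℝ)/2) * (1-a) := by
    rw [show (7:ℝ)/2 = 5/2 + 1 by norm_num, rpow_succ' hc0 (by norm_num) (by norm_num)]
  rw [hA7, hA5, hC7, hC5]
  ring

lemma realBeta' (u v : ℝ) (hu : 0 < u) (hv : 0 < v) :
    ∫ x in (0:ℝ)..1, x ^ (u-1) * (1-x) ^ (v-1)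
      = Real.Gamma u * Real.Gamma v / Real.Gamma (u+v) := by
  have key : Complex.Gamma u * Complex.Gamma v
      = Complex.Gamma (u+v) * Complex.betaIntegral u v :=
    Complex.Gamma_mul_Gamma_eq_betaIntegral (by simpa using hu) (by simpa using hv)
  have hbeta : Complex.betaIntegral u v
      = ((∫ x in (0:ℝ)..1, x ^ (u-1) * (1-x) ^ (v-1) : ℝ) : ℂ) := by
    rw [Complex.betaIntegral]
    rw [← intervalIntegral.integral_ofReal]
    refine intervalIntegral.integral_congr fun x hx => ?_
    rw [Set.uIcc_of_le (by norm_num : (0:ℝ) ≤ 1)] at hx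
    push_cast
    rw [Complex.ofReal_cpow hx.1, Complex.ofReal_cpow (by linarith [hx.2] : (0:ℝ) ≤ 1 - x)]
    push_cast
    ring
  have hgamma : Real.Gamma (u+v) ≠ 0 :=
    Real.Gamma_ne_zero (by intro m; nlinarith [Nat.cast_nonneg (α := ℝ) m])
  rw [hbeta] at key
  have := congrArg Complex.re key
  simp only [← Complex.ofReal_add, Complex.Gamma_ofReal, ← Complex.ofReal_mul,
    Complex.ofReal_re] at this
  field_simp
  linarith [this]

lemma G32' : Real.Gamma (3/2) = Real.sqrt π / 2 := by
  have := Real.Gamma_add_one (s := 1/2) (by norm_num)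
  rw [show (1:ℝ)/2 + 1 = 3/2 by norm_num, Real.Gamma_one_half_eq] at this
  rw [this]; ring
lemma G52' : Real.Gamma (5/2) = 3 * Real.sqrt π / 4 := by
  have := Real.Gamma_add_one (s := 3/2) (by norm_num)
  rw [show (3:ℝ)/2 + 1 = 5/2 by norm_num, G32'] at this
  rw [this]; ring
lemma G72' : Real.Gamma (7/2) = 15 * Real.sqrt π / 8 := by
  have := Real.Gamma_add_one (s := 5/2) (by norm_num)
  rw [show (5:ℝ)/2 + 1 = 7/2 by norm_num, G52'] at this
  rw [this]; ring
lemma G92' : Real.Gamma (9/2) = 105 * Real.sqrt π / 16 := by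
  have := Real.Gamma_add_one (s := 7/2) (by norm_num)
  rw [show (7:ℝ)/2 + 1 = 9/2 by norm_num, G72'] at this
  rw [this]; ring
lemma G112' : Real.Gamma (11/2) = 945 * Real.sqrt π / 32 := by
  have := Real.Gamma_add_one (s := 9/2) (by norm_num)
  rw [show (9:ℝ)/2 + 1 = 11/2 by norm_num, G92'] at this
  rw [this]; ring
lemma G7' : Real.Gamma 7 = 720 := by
  have := Real.Gamma_nat_eq_factorial 6
  rw [show ((6:ℕ):ℝ) + 1 = 7 by norm_num] at this
  rw [this]; norm_num [Nat.factorial]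
lemma G8' : Real.Gamma 8 = 5040 := by
  have := Real.Gamma_nat_eq_factorial 7
  rw [show ((7:ℕ):ℝ) + 1 = 8 by norm_num] at this
  rw [this]; norm_num [Nat.factorial]

lemma B1v : ∫ x in (0:ℝ)..1, x ^ ((3:ℝ)/2) * (1-x) ^ ((7:ℝ)/2) = 7*π/1024 := by
  have h := realBeta' (5/2) (9/2) (by norm_num) (by norm_num)
  rw [show (5:ℝ)/2 - 1 = 3/2 by norm_num, show (9:ℝ)/2 - 1 = 7/2 by norm_num,
    show (5:ℝ)/2 + 9/2 = 7 by norm_num, G52', G92', G7'] at h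
  rw [h, show 3 * Real.sqrt π / 4 * (105 * Real.sqrt π / 16) / 720
      = 315/46080 * (Real.sqrt π * Real.sqrt π) by ring,
    Real.mul_self_sqrt pi_pos.le]
  ring
lemma B2v : ∫ x in (0:ℝ)..1, x ^ ((5:ℝ)/2) * (1-x) ^ ((7:ℝ)/2) = 5*π/2048 := by
  have h := realBeta' (7/2) (9/2) (by norm_num) (by norm_num)
  rw [show (7:ℝ)/2 - 1 = 5/2 by norm_num, show (9:ℝ)/2 - 1 = 7/2 by norm_num,
    show (7:ℝ)/2 + 9/2 = 8 by norm_num, G72', G92', G8'] at h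
  rw [h, show 15 * Real.sqrt π / 8 * (105 * Real.sqrt π / 16) / 5040
      = 1575/645120 * (Real.sqrt π * Real.sqrt π) by ring,
    Real.mul_self_sqrt pi_pos.le]
  ring
lemma B3v : ∫ x in (0:ℝ)..1, x ^ ((7:ℝ)/2) * (1-x) ^ ((3:ℝ)/2) = 7*π/1024 := by
  have h := realBeta' (9/2) (5/2) (by norm_num) (by norm_num)
  rw [show (9:ℝ)/2 - 1 = 7/2 by norm_num, show (5:ℝ)/2 - 1 = 3/2 by norm_num,
    show (9:ℝ)/2 + 5/2 = 7 by norm_num, G52', G92', G7'] at h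
  rw [h, show 105 * Real.sqrt π / 16 * (3 * Real.sqrt π / 4) / 720
      = 315/46080 * (Real.sqrt π * Real.sqrt π) by ring,
    Real.mul_self_sqrt pi_pos.le]
  ring
lemma B4v : ∫ x in (0:ℝ)..1, x ^ ((9:ℝ)/2) * (1-x) ^ ((3:ℝ)/2) = 9*π/2048 := by
  have h := realBeta' (11/2) (5/2) (by norm_num) (by norm_num)
  rw [show (11:ℝ)/2 - 1 = 9/2 by norm_num, show (5:ℝ)/2 - 1 = 3/2 by norm_num,
    show (11:ℝ)/2 + 5/2 = 8 by norm_num, G52', G112', G8'] at h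
  rw [h, show 945 * Real.sqrt π / 32 * (3 * Real.sqrt π / 4) / 5040
      = 2835/645120 * (Real.sqrt π * Real.sqrt π) by ring,
    Real.mul_self_sqrt pi_pos.le]
  ring

lemma outer_eq' :
    ∫ a in (0:ℝ)..1, 128/45*π^2/7 * (a ^ ((3:ℝ)/2) * (1-a) ^ ((7:ℝ)/2) * (4+8*a)
        + a ^ ((7:ℝ)/2) * (1-a) ^ ((3:ℝ)/2) * (12-8*a)) = 4*π^3/105 := by
  have hstep : ∫ a in (0:ℝ)..1, 128/45*π^2/7 * (a ^ ((3:ℝ)/2) * (1-a) ^ ((7:ℝ)/2) * (4+8*a)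
        + a ^ ((7:ℝ)/2) * (1-a) ^ ((3:ℝ)/2) * (12-8*a))
      = ∫ a in (0:ℝ)..1, (128/45*π^2/7) *
          (4 * (a ^ ((3:ℝ)/2) * (1-a) ^ ((7:ℝ)/2)) + 8 * (a ^ ((5:ℝ)/2) * (1-a) ^ ((7:ℝ)/2))
            + 12 * (a ^ ((7:ℝ)/2) * (1-a) ^ ((3:ℝ)/2))
            + (-8) * (a ^ ((9:ℝ)/2) * (1-a) ^ ((3:ℝ)/2))) := by
    refine intervalIntegral.integral_congr fun a ha => ?_
    rw [Set.uIcc_of_le zero_le_one] at ha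
    have h5 : a ^ ((5:ℝ)/2) = a ^ ((3:ℝ)/2) * a := by
      rw [show (5:ℝ)/2 = 3/2 + 1 by norm_num, rpow_succ' ha.1 (by norm_num) (by norm_num)]
    have h9 : a ^ ((9:ℝ)/2) = a ^ ((7:ℝ)/2) * a := by
      rw [show (9:ℝ)/2 = 7/2 + 1 by norm_num, rpow_succ' ha.1 (by norm_num) (by norm_num)]
    rw [h5, h9]; ring
  have i1 : IntervalIntegrable
      (fun a : ℝ => (4:ℝ) * (a ^ ((3:ℝ)/2) * (1-a) ^ ((7:ℝ)/2))) volume 0 1 :=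
    (continuous_const.mul (contF' (3/2) (7/2) (by norm_num) (by norm_num))).intervalIntegrable 0 1
  have i2 : IntervalIntegrable
      (fun a : ℝ => (8:ℝ) * (a ^ ((5:ℝ)/2) * (1-a) ^ ((7:ℝ)/2))) volume 0 1 :=
    (continuous_const.mul (contF' (5/2) (7/2) (by norm_num) (by norm_num))).intervalIntegrable 0 1
  have i3 : IntervalIntegrable
      (fun a : ℝ => (12:ℝ) * (a ^ ((7:ℝ)/2) * (1-a) ^ ((3:ℝ)/2))) volume 0 1 :=
    (continuous_const.mul (contF' (7/2) (3/2) (by norm_num) (by norm_num))).intervalIntegrable 0 1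
  have i4 : IntervalIntegrable
      (fun a : ℝ => (-8:ℝ) * (a ^ ((9:ℝ)/2) * (1-a) ^ ((3:ℝ)/2))) volume 0 1 :=
    (continuous_const.mul (contF' (9/2) (3/2) (by norm_num) (by norm_num))).intervalIntegrable 0 1
  rw [hstep, intervalIntegral.integral_const_mul,
    intervalIntegral.integral_add ((i1.add i2).add i3) i4,
    intervalIntegral.integral_add (i1.add i2) i3,
    intervalIntegral.integral_add i1 i2,
    intervalIntegral.integral_const_mul, intervalIntegral.integral_const_mul,
    intervalIntegral.integral_const_mul, intervalIntegral.integral_const_mul,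
    B1v, B2v, B3v, B4v]
  ring

end helpers

/-- The integral of `V(a,f)` over `[0,1]²` equals `4π³/105`. -/
theorem stmt_14 :
    ∫ p in (Set.Icc (0 : ℝ) 1 ×ˢ Set.Icc (0 : ℝ) 1), Vaf p.1 p.2 = 4 * π ^ 3 / 105 := by
  have hmeas : Measurable fun p : ℝ × ℝ => Vaf p.1 p.2 := by
    unfold Vaf
    refine Measurable.ite
      (measurableSet_lt (measurable_fst.add measurable_snd) measurable_const) ?_ ?_
    · refine Measurable.mul (Measurable.mul measurable_const ?_) (by fun_prop)
      exact (((continuous_fst.mul continuous_snd).rpow_const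
        fun x => Or.inr (by norm_num)).measurable)
    · refine Measurable.mul (Measurable.mul measurable_const ?_) (by fun_prop)
      exact (((by fun_prop : Continuous fun p : ℝ × ℝ => (1-p.1)*(1-p.2)).rpow_const
        fun x => Or.inr (by norm_num)).measurable)
  have hbound : ∀ p : ℝ × ℝ, p ∈ (Set.Icc (0:ℝ) 1 ×ˢ Set.Icc (0:ℝ) 1) →
      ‖Vaf p.1 p.2‖ ≤ 128/45*π^2*6 := by
    rintro ⟨a, f⟩ hp
    obtain ⟨⟨ha0, ha1⟩, ⟨hf0, hf1⟩⟩ := hp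
    have hK : (0:ℝ) ≤ 128/45*π^2 := by positivity
    rw [Real.norm_eq_abs]
    unfold Vaf
    split_ifs with h
    · have hx0 : (0:ℝ) ≤ a * f := mul_nonneg ha0 hf0
      have hx1 : a * f ≤ 1 := by nlinarith
      have hr0 : (0:ℝ) ≤ (a*f) ^ ((3:ℝ)/2) := Real.rpow_nonneg hx0 _
      have hr1 : (a*f) ^ ((3:ℝ)/2) ≤ 1 := Real.rpow_le_one hx0 hx1 (by norm_num)
      have hs6 : |5*(1-a)*(1-f) - a*f| ≤ 6 := by
        rw [abs_le]; constructor <;> nlinarith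
      calc |128/45*π^2 * (a*f) ^ ((3:ℝ)/2) * (5*(1-a)*(1-f) - a*f)|
          = 128/45*π^2 * ((a*f) ^ ((3:ℝ)/2) * |5*(1-a)*(1-f) - a*f|) := by
            rw [abs_mul, abs_mul, abs_of_nonneg hK, abs_of_nonneg hr0]; ring
        _ ≤ 128/45*π^2 * (1 * 6) := by
            refine mul_le_mul_of_nonneg_left ?_ hK
            exact mul_le_mul hr1 hs6 (abs_nonneg _) zero_le_one
        _ = 128/45*π^2*6 := by ring
    · have hx0 : (0:ℝ) ≤ (1-a) * (1-f) := mul_nonneg (by linarith) (by linarith)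
      have hx1 : (1-a) * (1-f) ≤ 1 := by nlinarith
      have hr0 : (0:ℝ) ≤ ((1-a)*(1-f)) ^ ((3:ℝ)/2) := Real.rpow_nonneg hx0 _
      have hr1 : ((1-a)*(1-f)) ^ ((3:ℝ)/2) ≤ 1 := Real.rpow_le_one hx0 hx1 (by norm_num)
      have hs6 : |5*a*f - (1-a)*(1-f)| ≤ 6 := by
        rw [abs_le]; constructor <;> nlinarith
      calc |128/45*π^2 * ((1-a)*(1-f)) ^ ((3:ℝ)/2) * (5*a*f - (1-a)*(1-f))|
          = 128/45*π^2 * (((1-a)*(1-f)) ^ ((3:ℝ)/2) * |5*a*f - (1-a)*(1-f)|) := by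
            rw [abs_mul, abs_mul, abs_of_nonneg hK, abs_of_nonneg hr0]; ring
        _ ≤ 128/45*π^2 * (1 * 6) := by
            refine mul_le_mul_of_nonneg_left ?_ hK
            exact mul_le_mul hr1 hs6 (abs_nonneg _) zero_le_one
        _ = 128/45*π^2*6 := by ring
  have hsm : MeasurableSet (Set.Icc (0:ℝ) 1 ×ˢ Set.Icc (0:ℝ) 1) :=
    measurableSet_Icc.prod measurableSet_Icc
  have hInt : IntegrableOn (fun p : ℝ × ℝ => Vaf p.1 p.2)
      (Set.Icc (0:ℝ) 1 ×ˢ Set.Icc (0:ℝ) 1) ((volume : Measure ℝ).prod volume) := by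
    refine Measure.integrableOn_of_bounded (M := 128/45*π^2*6) ?_ hmeas.aestronglyMeasurable ?_
    · rw [← Measure.volume_eq_prod ℝ ℝ]
      exact (isCompact_Icc.prod isCompact_Icc).measure_lt_top.ne
    · rw [← Measure.volume_eq_prod ℝ ℝ]
      filter_upwards [ae_restrict_mem hsm] with p hp using hbound p hp
  rw [Measure.volume_eq_prod ℝ ℝ, setIntegral_prod _ hInt]
  have hin : Set.EqOn (fun a => ∫ f in Set.Icc (0:ℝ) 1, Vaf a f)
      (fun a => 128/45*π^2/7 * (a ^ ((3:ℝ)/2) * (1-a) ^ ((7:ℝ)/2) * (4+8*a)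
        + a ^ ((7:ℝ)/2) * (1-a) ^ ((3:ℝ)/2) * (12-8*a))) (Set.Icc (0:ℝ) 1) := by
    intro a ha
    simp only
    rw [MeasureTheory.integral_Icc_eq_integral_Ioc,
      ← intervalIntegral.integral_of_le zero_le_one, inner_eq' ha.1 ha.2]
  rw [MeasureTheory.setIntegral_congr_fun measurableSet_Icc hin,
    MeasureTheory.integral_Icc_eq_integral_Ioc,
    ← intervalIntegral.integral_of_le zero_le_one, outer_eq']
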